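/- Let h be the automorphism of F₃ defined by h(α) = (β⁻¹γβα)⁻¹·α·(β⁻¹γβα), h(β) = β, h(γ) = (βαβ⁻¹)⁻¹·γ·(βαβ⁻¹). Then for every δ ∈ Dom φ: (i) T²(δ) ∈ Dom φ and φ(T²(δ)) = h(φ(δ)); (ii) S(δ) ∈ Dom φ and φ(S(δ)) = T(φ(δ)); (iii) T(S(T⁻¹(δ))) ∈ Dom φ and φ(T(S(T⁻¹(δ)))) = φ(δ). Moreover h(δ) = (γβα)⁻¹·T⁻¹(S⁻¹(δ))·(γβα) for every δ ∈ F₃. -/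

import Mathlib

noncomputable section

/-- The action of `Equiv.Perm X` on `X → G` by permuting coordinates. -/
def permAut (X G : Type) [Group G] : Equiv.Perm X →* MulAut (X → G) where
  toFun σ :=
  { toFun := fun f => f ∘ ⇑σ⁻¹
    invFun := fun f => f ∘ ⇑σ
    left_inv := fun f => by funext x; simp
    right_inv := fun f => by funext x; simp
    map_mul' := fun f g => rfl }
  map_one' := by ext f x; simp
  map_mul' := fun σ τ => by
    ext f x
    simp [Function.comp, mul_inv_rev]

/-- The wreath product `G ≀ C₂` with base alphabet `Bool`. -/
abbrev Wr (G : Type) [Group G] := (Bool → G) ⋊[permAut Bool G] Equiv.Perm Bool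

/-- `pair g₀ g₁` is the element `⟨g₀, g₁⟩` of the base group. -/
def pair {G : Type} [Group G] (g₀ g₁ : G) : Bool → G := fun x => bif x then g₁ else g₀

/-- The nontrivial element of `Sym({0,1})`. -/
def σswap : Equiv.Perm Bool := Equiv.swap false true

namespace Rab3

/-- The free group on three generators `α`, `β`, `γ`. -/
abbrev F3 := FreeGroup (Fin 3)

def ga : F3 := FreeGroup.of 0
def gb : F3 := FreeGroup.of 1
def gc : F3 := FreeGroup.of 2

/-- The rabbit wreath recursion:
`Φ(α) = ⟨α⁻¹β⁻¹, γβα⟩σ`, `Φ(β) = ⟨α, 1⟩`, `Φ(γ) = ⟨β, 1⟩`. -/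
def Phi : F3 →* Wr F3 :=
  FreeGroup.lift ![⟨pair (ga⁻¹ * gb⁻¹) (gc * gb * ga), σswap⟩, ⟨pair ga 1, 1⟩, ⟨pair gb 1, 1⟩]

/-- `Φ(g)` is inactive, i.e. `g ∈ Dom φ`. -/
def inactive (g : F3) : Prop := (Phi g).right = 1

/-- The virtual endomorphism `φ(g) = g|₀` (first coordinate of `Φ(g)`). -/
def phi (g : F3) : F3 := (Phi g).left false

/-- `T : α ↦ α^{βα}, β ↦ β^{α}, γ ↦ γ`. -/
def Tmap : F3 →* F3 := FreeGroup.lift ![(gb * ga)⁻¹ * ga * (gb * ga), ga⁻¹ * gb * ga, gc]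

/-- `T⁻¹ : α ↦ α^{β⁻¹}, β ↦ β^{α⁻¹β⁻¹}, γ ↦ γ`. -/
def Tmapinv : F3 →* F3 :=
  FreeGroup.lift ![gb * ga * gb⁻¹, (ga⁻¹ * gb⁻¹)⁻¹ * gb * (ga⁻¹ * gb⁻¹), gc]

/-- The automorphism `T` of `F₃`. -/
def Taut : F3 ≃* F3 :=
  MonoidHom.toMulEquiv Tmap Tmapinv
    (by ext x; fin_cases x <;> (simp [Tmap, Tmapinv, ga, gb, gc] <;> group))
    (by ext x; fin_cases x <;> (simp [Tmap, Tmapinv, ga, gb, gc] <;> group))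

/-- `S : α ↦ α, β ↦ β^{γβ}, γ ↦ γ^{β}`. -/
def Smap : F3 →* F3 :=
  FreeGroup.lift ![ga, (gc * gb)⁻¹ * gb * (gc * gb), gb⁻¹ * gc * gb]

/-- `S⁻¹ : α ↦ α, β ↦ β^{γ⁻¹}, γ ↦ γ^{β⁻¹γ⁻¹}`. -/
def Smapinv : F3 →* F3 :=
  FreeGroup.lift ![ga, gc * gb * gc⁻¹, (gb⁻¹ * gc⁻¹)⁻¹ * gc * (gb⁻¹ * gc⁻¹)]

/-- The automorphism `S` of `F₃`. -/
def Saut : F3 ≃* F3 :=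
  MonoidHom.toMulEquiv Smap Smapinv
    (by ext x; fin_cases x <;> (simp [Smap, Smapinv, ga, gb, gc] <;> group))
    (by ext x; fin_cases x <;> (simp [Smap, Smapinv, ga, gb, gc] <;> group))

/-- The automorphism `h` of `F₃`:
`α ↦ α^{β⁻¹γβα}`, `β ↦ β`, `γ ↦ γ^{βαβ⁻¹}`. -/
def hmap : F3 →* F3 :=
  FreeGroup.lift ![(gb⁻¹ * gc * gb * ga)⁻¹ * ga * (gb⁻¹ * gc * gb * ga), gb,
    (gb * ga * gb⁻¹)⁻¹ * gc * (gb * ga * gb⁻¹)]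

end Rab3


namespace Rab3
set_option linter.dupNamespace false
set_option maxHeartbeats 2000000

/-- Coordinatewise application of an endomorphism on the base group. -/
def baseMap (f : F3 →* F3) : (Bool → F3) →* (Bool → F3) where
  toFun p := f ∘ p
  map_one' := by funext b; simp
  map_mul' p q := by funext b; simp

/-- Coordinatewise lift of an endomorphism to the wreath product. -/
def liftW (f : F3 →* F3) : Wr F3 →* Wr F3 :=
  SemidirectProduct.map (baseMap f) (MonoidHom.id _) (fun _ => rfl)

@[simp] lemma permAut_apply (π : Equiv.Perm Bool) (p : Bool → F3) (b : Bool) :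
    permAut Bool F3 π p b = p (π⁻¹ b) := rfl

@[simp] lemma pair_false {G : Type} [Group G] (g h : G) : pair g h false = g := rfl
@[simp] lemma pair_true {G : Type} [Group G] (g h : G) : pair g h true = h := rfl

@[simp] lemma σswap_inv : σswap⁻¹ = σswap := rfl
@[simp] lemma σswap_false : σswap false = true := by simp [σswap]
@[simp] lemma σswap_true : σswap true = false := by simp [σswap]

lemma key1 : Phi.comp (Tmap.comp Tmap) = (liftW hmap).comp Phi := by
  refine FreeGroup.ext_hom _ _ fun x => ?_
  fin_cases x <;>
  · apply SemidirectProduct.ext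
    case _ =>
      funext b
      cases b <;>
      · simp [Phi, Tmap, hmap, liftW, baseMap, ga, gb, gc, SemidirectProduct.mul_left,
          SemidirectProduct.mul_right, SemidirectProduct.inv_left, SemidirectProduct.inv_right,
          Equiv.Perm.mul_apply, Equiv.Perm.one_apply, mul_inv_rev, Function.comp]
        all_goals group
    case _ =>
      simp [Phi, Tmap, hmap, liftW, baseMap, ga, gb, gc,
        SemidirectProduct.mul_right, SemidirectProduct.inv_right] <;> decide

lemma key2 : Phi.comp Smap = (liftW Tmap).comp Phi := by
  refine FreeGroup.ext_hom _ _ fun x => ?_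
  fin_cases x <;>
  · apply SemidirectProduct.ext
    case _ =>
      funext b
      cases b <;>
      · simp [Phi, Smap, Tmap, liftW, baseMap, ga, gb, gc, SemidirectProduct.mul_left,
          SemidirectProduct.mul_right, SemidirectProduct.inv_left, SemidirectProduct.inv_right,
          Equiv.Perm.mul_apply, Equiv.Perm.one_apply, mul_inv_rev, Function.comp]
        all_goals group
    case _ =>
      simp [Phi, Smap, Tmap, liftW, baseMap, ga, gb, gc,
        SemidirectProduct.mul_right, SemidirectProduct.inv_right] <;> decide

lemma key3 : Phi.comp (Tmap.comp (Smap.comp Tmapinv)) = Phi := by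
  refine FreeGroup.ext_hom _ _ fun x => ?_
  fin_cases x <;>
  · apply SemidirectProduct.ext
    case _ =>
      funext b
      cases b <;>
      · simp [Phi, Smap, Tmap, Tmapinv, ga, gb, gc, SemidirectProduct.mul_left,
          SemidirectProduct.mul_right, SemidirectProduct.inv_left, SemidirectProduct.inv_right,
          Equiv.Perm.mul_apply, Equiv.Perm.one_apply, mul_inv_rev, Function.comp]
        group
    case _ =>
      simp [Phi, Smap, Tmap, Tmapinv, ga, gb, gc,
        SemidirectProduct.mul_right, SemidirectProduct.inv_right] <;> decide

lemma key4 (δ : F3) : hmap δ = (gc * gb * ga)⁻¹ * Tmapinv (Smapinv δ) * (gc * gb * ga) := by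
  have : hmap = ((MulAut.conj ((gc * gb * ga)⁻¹)).toMonoidHom.comp (Tmapinv.comp Smapinv)) := by
    refine FreeGroup.ext_hom _ _ fun x => ?_
    fin_cases x <;>
    · simp [hmap, Tmapinv, Smapinv, ga, gb, gc, MulAut.conj, mul_inv_rev]
      group
  rw [this]
  simp [MulAut.conj, mul_assoc]

@[simp] lemma liftW_right (f : F3 →* F3) (x : Wr F3) : (liftW f x).right = x.right := rfl
@[simp] lemma liftW_left (f : F3 →* F3) (x : Wr F3) (b : Bool) :
    (liftW f x).left b = f (x.left b) := rfl

lemma Taut_eq (g : F3) : Taut g = Tmap g := rfl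
lemma Tautsymm_eq (g : F3) : Taut.symm g = Tmapinv g := rfl
lemma Saut_eq (g : F3) : Saut g = Smap g := rfl

end Rab3

open Rab3 in
theorem stmt6 :
    (∀ δ : F3, inactive δ →
      (inactive (Taut (Taut δ)) ∧ phi (Taut (Taut δ)) = hmap (phi δ)) ∧
      (inactive (Saut δ) ∧ phi (Saut δ) = Taut (phi δ)) ∧
      (inactive (Taut (Saut (Taut.symm δ))) ∧
        phi (Taut (Saut (Taut.symm δ))) = phi δ)) ∧
    (∀ δ : F3, hmap δ = (gc * gb * ga)⁻¹ * Taut.symm (Saut.symm δ) * (gc * gb * ga)) := by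
  constructor
  · intro δ hδ
    have e1 : Phi (Taut (Taut δ)) = liftW hmap (Phi δ) := by
      have := DFunLike.congr_fun key1 δ
      simpa [Taut_eq] using this
    have e2 : Phi (Saut δ) = liftW Tmap (Phi δ) := by
      have := DFunLike.congr_fun key2 δ
      simpa [Saut_eq] using this
    have e3 : Phi (Taut (Saut (Taut.symm δ))) = Phi δ := by
      have := DFunLike.congr_fun key3 δ
      simpa [Taut_eq, Saut_eq, Tautsymm_eq] using this
    have hδ' : (Phi δ).right = 1 := hδ
    refine ⟨⟨?_, ?_⟩, ⟨?_, ?_⟩, ?_, ?_⟩ <;>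
      simp [inactive, phi, e1, e2, e3, hδ'] <;> rfl
  · intro δ
    have : Saut.symm δ = Smapinv δ := rfl
    rw [this, Tautsymm_eq]
    exact key4 δ
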